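/- Let q ≥ 3 be an integer, β ≥ 0, and let x = (x₁,...,x_q) ∈ Δ_q be a global minimizer of Φ_{β,h}^{(q)}. (1) If h > 0, then x₁ > x₂ and x₂ = x₃ = ... = x_q. (2) If h < 0, then x is a permutation in the coordinates x₂,...,x_q of a vector satisfying x₁ < x₂ = x₃ = ... = x_{q−1} ≤ x_q. -/

import Mathlib

open Real Set
set_option maxHeartbeats 1000000

noncomputable section

/-- The probability simplex `Δ_q`. -/
def pottsSimplex (q : ℕ) : Set (Fin q → ℝ) :=
  {x | (∀ k, 0 ≤ x k) ∧ ∑ k, x k = 1}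

/-- The mean-field free-energy function `Φ_{β,h}^{(q)}` of the `q`-state Potts model. -/
noncomputable def pottsPhi (q : ℕ) [NeZero q] (β h : ℝ) (x : Fin q → ℝ) : ℝ :=
  (∑ k, (-(β / 2) * x k ^ 2 + x k * Real.log (x k))) - h * x 0

/-- `x` is a global minimizer of `Φ_{β,h}^{(q)}` on `Δ_q`. -/
def IsPottsMinimizer (q : ℕ) [NeZero q] (β h : ℝ) (x : Fin q → ℝ) : Prop :=
  x ∈ pottsSimplex q ∧ ∀ y ∈ pottsSimplex q, pottsPhi q β h x ≤ pottsPhi q β h y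

noncomputable def FF (β : ℝ) (u : ℝ) : ℝ := -(β / 2) * u ^ 2 + u * Real.log u

lemma sum_update₂ {q : ℕ} (g : ℝ → ℝ) (x : Fin q → ℝ) {i j : Fin q} (hij : i ≠ j) (t u : ℝ) :
    ∑ k, g (Function.update (Function.update x i t) j u k)
      = ∑ k, g (x k) - g (x i) - g (x j) + g t + g u := by
  have h1 : ∀ k, g (Function.update (Function.update x i t) j u k)
      = Function.update (fun k => g (Function.update x i t k)) j (g u) k := by
    intro k; rw [Function.apply_update (fun _ v => g v)]
  have h2 : ∀ k, g (Function.update x i t k)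
      = Function.update (fun k => g (x k)) i (g t) k := by
    intro k; rw [Function.apply_update (fun _ v => g v)]
  simp_rw [h1]
  rw [Finset.sum_update_of_mem (Finset.mem_univ j)]
  simp_rw [h2]
  rw [Finset.sum_update_of_mem (by simp [hij] : i ∈ Finset.univ \ {j})]
  have hiu : ∑ k ∈ (Finset.univ \ {j}) \ {i}, g (x k)
        = ∑ k, g (x k) - g (x j) - g (x i) := by
      rw [Finset.sum_sdiff_eq_sub (by simp [hij]), Finset.sum_sdiff_eq_sub (by simp)]
      simp
  rw [hiu]; ring

lemma update₂_mem {q : ℕ} {x : Fin q → ℝ} (hx : x ∈ pottsSimplex q) {i j : Fin q}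
    (hij : i ≠ j) {t : ℝ} (ht0 : 0 ≤ t) (hts : t ≤ x i + x j) :
    Function.update (Function.update x i t) j (x i + x j - t) ∈ pottsSimplex q := by
  constructor
  · intro k
    rcases eq_or_ne k j with rfl | hkj
    · simp; linarith
    rcases eq_or_ne k i with rfl | hki
    · simp [Function.update_of_ne hkj, ht0]
    · simp [Function.update_of_ne hkj, Function.update_of_ne hki]; exact hx.1 k
  · have := sum_update₂ id x hij t (x i + x j - t)
    simp only [id] at this
    rw [this, hx.2]; ring

/-- The key two-coordinate minimality inequality. -/
lemma pair_min {q : ℕ} [NeZero q] {β h : ℝ} {x : Fin q → ℝ} (hx : IsPottsMinimizer q β h x)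
    {i j : Fin q} (hij : i ≠ j) {t : ℝ} (ht0 : 0 ≤ t) (hts : t ≤ x i + x j) :
    FF β (x i) + FF β (x j) - (if i = 0 then h else 0) * x i - (if j = 0 then h else 0) * x j
      ≤ FF β t + FF β (x i + x j - t) - (if i = 0 then h else 0) * t
        - (if j = 0 then h else 0) * (x i + x j - t) := by
  set u := x i + x j - t with hu
  set y := Function.update (Function.update x i t) j u with hy
  have hymem : y ∈ pottsSimplex q := update₂_mem hx.1 hij ht0 hts
  have hle := hx.2 y hymem
  have hsum : ∑ k, (-(β / 2) * y k ^ 2 + y k * Real.log (y k))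
      = ∑ k, (-(β / 2) * x k ^ 2 + x k * Real.log (x k))
        - FF β (x i) - FF β (x j) + FF β t + FF β u := by
    exact sum_update₂ (FF β) x hij t u
  have hy0 : h * y 0 = h * x 0 + (if i = 0 then h else 0) * (t - x i)
      + (if j = 0 then h else 0) * (u - x j) := by
    rcases eq_or_ne j 0 with rfl | hj0
    · have hi0 : i ≠ 0 := hij
      have : y 0 = u := by simp [hy]
      rw [this]; simp [hi0]; ring
    · rcases eq_or_ne i 0 with rfl | hi0
      · have : y 0 = t := by
          simp [hy, Function.update_of_ne (Ne.symm hj0)]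
        rw [this]; simp [hj0]; ring
      · have : y 0 = x 0 := by
          simp [hy, Function.update_of_ne (Ne.symm hj0), Function.update_of_ne (Ne.symm hi0)]
        rw [this]; simp [hj0, hi0]
  simp only [pottsPhi] at hle
  rw [hsum, hy0] at hle
  clear_value u y
  have e1 : (if i = 0 then h else 0) * (t - x i)
      = (if i = 0 then h else 0) * t - (if i = 0 then h else 0) * x i := by ring
  have e2 : (if j = 0 then h else 0) * (u - x j)
      = (if j = 0 then h else 0) * u - (if j = 0 then h else 0) * x j := by ring
  linarith [hle, e1, e2, hu]

/-- Every coordinate of a minimizer is strictly positive. -/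
lemma minimizer_pos {q : ℕ} [NeZero q] {β h : ℝ} {x : Fin q → ℝ} (hβ : 0 ≤ β)
    (hx : IsPottsMinimizer q β h x) (i : Fin q) : 0 < x i := by
  rcases (hx.1.1 i).lt_or_eq with h' | h'
  · exact h'
  exfalso
  have hxi : x i = 0 := h'.symm
  -- find a positive coordinate
  obtain ⟨j, hj⟩ : ∃ j, 0 < x j := by
    by_contra hcon
    push_neg at hcon
    have : ∑ k, x k ≤ 0 := Finset.sum_nonpos fun k _ => hcon k
    rw [hx.1.2] at this; linarith
  have hij : i ≠ j := by rintro rfl; rw [hxi] at hj; exact lt_irrefl _ hj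
  set s := x i + x j with hs
  have hs0 : 0 < s := by rw [hs, hxi]; linarith
  set C := β * s - Real.log s + |h| with hC
  set t := min (s / 2) (Real.exp (-C - 1)) with ht
  have ht0 : 0 < t := lt_min (by linarith) (Real.exp_pos _)
  have hths : t ≤ s / 2 := min_le_left _ _
  have hkey := pair_min hx hij (le_of_lt ht0) (by rw [← hs]; linarith)
  set c := (if i = 0 then h else 0) with hc
  set d := (if j = 0 then h else 0) with hd
  rw [← hs] at hkey
  -- bound pieces
  have hst : 0 < s - t := by linarith
  have hlogt : Real.log t ≤ -C - 1 := by
    calc Real.log t ≤ Real.log (Real.exp (-C - 1)) :=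
          Real.log_le_log ht0 (min_le_right _ _)
      _ = -C - 1 := Real.log_exp _
  clear_value t C c d s
  have h1 : FF β t ≤ t * Real.log t := by
    have : -(β / 2) * t ^ 2 ≤ 0 := by nlinarith
    simp only [FF]; linarith
  have h2 : FF β (s - t) - FF β s ≤ β * s * t - t * Real.log s := by
    simp only [FF]
    have e1 : -(β / 2) * (s - t) ^ 2 - (-(β / 2) * s ^ 2) ≤ β * s * t := by
      nlinarith [mul_nonneg hβ (sq_nonneg t)]
    have e2 : (s - t) * Real.log (s - t) - s * Real.log s ≤ -(t * Real.log s) := by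
      have hll : Real.log (s - t) ≤ Real.log s := Real.log_le_log hst (by linarith)
      nlinarith [mul_nonneg hst.le (sub_nonneg.2 hll)]
    linarith [e1, e2]
  have hcd : - c + d ≤ |h| := by
    rw [hc, hd]
    split_ifs with hi0 hj0 hj0
    · exact absurd (hi0.trans hj0.symm) hij
    · linarith [neg_abs_le h]
    · simpa using le_abs_self h
    · simpa using abs_nonneg h
  have h3 : - (c * t) + d * t ≤ |h| * t := by
    nlinarith [mul_le_mul_of_nonneg_right hcd ht0.le]
  have hFF0 : FF β 0 = 0 := by simp [FF]
  have hxj : x j = s := by rw [hs, hxi]; ring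
  rw [hxi, hxj, hFF0] at hkey
  simp only [mul_zero, zero_add, sub_zero] at hkey
  have e3 : d * (s - t) = d * s - d * t := by ring
  have hC1 : Real.log t + C ≤ -1 := by linarith
  have h4 : t * (Real.log t + C) ≤ t * (-1) :=
    mul_le_mul_of_nonneg_left hC1 ht0.le
  have hb : t * (Real.log t + C) = t * Real.log t + β * s * t - t * Real.log s + |h| * t := by
    rw [hC]; ring
  have hsum2 : FF β t + FF β (s - t) - FF β s - c * t + d * t ≤ t * (Real.log t + C) := by
    rw [hb]; linarith [h1, h2, h3]
  have hct : c * (s - t) = c * s - c * t := by ring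
  linarith [hkey, hsum2, e3, h4, ht0]

/-- First-order stationarity between two coordinates. -/
lemma stationary {q : ℕ} [NeZero q] {β h : ℝ} {x : Fin q → ℝ} (hβ : 0 ≤ β)
    (hx : IsPottsMinimizer q β h x) {i j : Fin q} (hij : i ≠ j) :
    Real.log (x i) - β * x i - (if i = 0 then h else 0)
      = Real.log (x j) - β * x j - (if j = 0 then h else 0) := by
  have hpi := minimizer_pos hβ hx i
  have hpj := minimizer_pos hβ hx j
  set s := x i + x j with hs
  set c := (if i = 0 then h else 0) with hc
  set d := (if j = 0 then h else 0) with hd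
  set φ : ℝ → ℝ := fun t => FF β t + FF β (s - t) - c * t - d * (s - t) with hφ
  have hmin : IsMinOn φ (Icc 0 s) (x i) := by
    intro t htm
    simp only [Set.mem_Icc] at htm
    have := pair_min hx hij htm.1 htm.2
    rw [← hs, ← hc, ← hd] at this
    simp only [φ, Set.mem_setOf_eq]
    have hsxi : s - x i = x j := by rw [hs]; ring
    rw [hsxi]
    linarith
  have hnhds : Icc 0 s ∈ nhds (x i) := Icc_mem_nhds hpi (by rw [hs]; linarith)
  have hloc : IsLocalMin φ (x i) := hmin.isLocalMin hnhds
  have hsxi : s - x i = x j := by rw [hs]; ring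
  have hd1 : HasDerivAt (fun t : ℝ => FF β t)
      (-(β / 2) * (2 * x i) + (Real.log (x i) + 1)) (x i) := by
    have ha : HasDerivAt (fun t : ℝ => t ^ 2) (2 * x i) (x i) := by
      simpa using hasDerivAt_pow 2 (x i)
    exact (ha.const_mul (-(β / 2))).add (Real.hasDerivAt_mul_log hpi.ne')
  have hd2 : HasDerivAt (fun t : ℝ => FF β (s - t))
      ((-(β / 2) * (2 * x j) + (Real.log (x j) + 1)) * (-1)) (x i) := by
    have hinner : HasDerivAt (fun t : ℝ => s - t) (-1) (x i) := by
      simpa using (hasDerivAt_id (x i)).const_sub s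
    have houter : HasDerivAt (fun u : ℝ => FF β u)
        (-(β / 2) * (2 * x j) + (Real.log (x j) + 1)) (s - x i) := by
      rw [hsxi]
      have ha : HasDerivAt (fun t : ℝ => t ^ 2) (2 * x j) (x j) := by
        simpa using hasDerivAt_pow 2 (x j)
      exact (ha.const_mul (-(β / 2))).add (Real.hasDerivAt_mul_log hpj.ne')
    exact HasDerivAt.comp (x i) houter hinner
  have hd3 : HasDerivAt φ
      ((-(β / 2) * (2 * x i) + (Real.log (x i) + 1))
        + (-(β / 2) * (2 * x j) + (Real.log (x j) + 1)) * (-1) - c - d * (-1)) (x i) := by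
    have hlin1 : HasDerivAt (fun t : ℝ => c * t) c (x i) := by
      simpa using (hasDerivAt_id (x i)).const_mul c
    have hlin2 : HasDerivAt (fun t : ℝ => d * (s - t)) (d * (-1)) (x i) := by
      have hinner : HasDerivAt (fun t : ℝ => s - t) (-1) (x i) := by
        simpa using (hasDerivAt_id (x i)).const_sub s
      simpa using hinner.const_mul d
    exact ((hd1.add hd2).sub hlin1).sub hlin2
  have hzero := hloc.hasDerivAt_eq_zero hd3
  have hfin : Real.log (x i) - β * x i - c - (Real.log (x j) - β * x j - d) = 0 := by
    linear_combination hzero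
  linear_combination hfin

/-- Swapping coordinate `k` with coordinate `0`. -/
lemma swap_le {q : ℕ} [NeZero q] {β h : ℝ} {x : Fin q → ℝ}
    (hx : IsPottsMinimizer q β h x) (k : Fin q) : h * x k ≤ h * x 0 := by
  have hymem : (x ∘ Equiv.swap 0 k) ∈ pottsSimplex q := by
    refine ⟨fun m => hx.1.1 _, ?_⟩
    rw [← hx.1.2]
    exact Equiv.sum_comp (Equiv.swap 0 k) x
  have hle := hx.2 _ hymem
  simp only [pottsPhi, Function.comp_apply] at hle
  have hsum : ∑ m, (-(β / 2) * x ((Equiv.swap 0 k) m) ^ 2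
        + x ((Equiv.swap 0 k) m) * Real.log (x ((Equiv.swap 0 k) m)))
      = ∑ m, (-(β / 2) * x m ^ 2 + x m * Real.log (x m)) :=
    Equiv.sum_comp (Equiv.swap 0 k) (fun u => -(β / 2) * x u ^ 2 + x u * Real.log (x u))
  rw [hsum, Equiv.swap_apply_left] at hle
  linarith

/-- Strict concavity of `u ↦ log u - β u`. -/
lemma slope_bound {β a b : ℝ} (ha : 0 < a) (hab : a < b)
    (hf : Real.log a - β * a = Real.log b - β * b) : 1 < β * b ∧ β * a < 1 := by
  have hb : 0 < b := ha.trans hab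
  constructor
  · have h1 : Real.log (a / b) < a / b - 1 :=
      Real.log_lt_sub_one_of_pos (by positivity)
        (fun e => (ne_of_lt hab) ((div_eq_one_iff_eq hb.ne').1 e))
    rw [Real.log_div ha.ne' hb.ne'] at h1
    have h3 : β * a - β * b < a / b - 1 := by linarith
    have h4 : (β * a - β * b) * b < (a / b - 1) * b :=
      mul_lt_mul_of_pos_right h3 hb
    have h5 : (a / b - 1) * b = a - b := by field_simp
    rw [h5] at h4
    nlinarith [h4, hab]
  · have h2 : Real.log (b / a) < b / a - 1 :=
      Real.log_lt_sub_one_of_pos (by positivity)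
        (fun e => (ne_of_gt hab) ((div_eq_one_iff_eq ha.ne').1 e))
    rw [Real.log_div hb.ne' ha.ne'] at h2
    have h3 : β * b - β * a < b / a - 1 := by linarith
    have h4 : (β * b - β * a) * a < (b / a - 1) * a :=
      mul_lt_mul_of_pos_right h3 ha
    have h5 : (b / a - 1) * a = b - a := by field_simp
    rw [h5] at h4
    nlinarith [h4, hab]

/-- Two distinct non-zero coordinates cannot share a value `b` with `β b > 1`. -/
lemma no_double_top {q : ℕ} [NeZero q] {β h : ℝ} {x : Fin q → ℝ} (hβ : 0 ≤ β)
    (hx : IsPottsMinimizer q β h x) {j k : Fin q} (hjk : j ≠ k) (hj0 : j ≠ 0) (hk0 : k ≠ 0)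
    (heq : x j = x k) (hgt : 1 < β * x j) : False := by
  have hbpos : 0 < x j := minimizer_pos hβ hx j
  have hβpos : 0 < β := by nlinarith
  obtain ⟨ε, hεdef⟩ : ∃ ε, ε = (x j - 1 / β) / 2 := ⟨_, rfl⟩
  have hinv : 1 / β < x j := by rw [div_lt_iff₀ hβpos]; linarith
  have hε0 : 0 < ε := by rw [hεdef]; linarith
  have hεb : ε < x j := by
    rw [hεdef]
    have : 0 < 1 / β := by positivity
    linarith
  have hkey0 := pair_min hx hjk (t := x j + ε) (by linarith) (by rw [← heq]; linarith)
  rw [if_neg hj0, if_neg hk0] at hkey0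
  simp only [zero_mul, sub_zero] at hkey0
  have hrw : x j + x k - (x j + ε) = x j - ε := by rw [← heq]; ring
  rw [hrw, ← heq] at hkey0
  -- hkey0 : FF β (x j) + FF β (x j) ≤ FF β (x j + ε) + FF β (x j - ε)
  have hb1 : 0 < x j - ε := by linarith
  have hb2 : 0 < x j + ε := by linarith
  -- entropy bounds
  have hq1 : Real.log (((x j + ε) * (x j - ε)) / (x j * x j))
      ≤ ((x j + ε) * (x j - ε)) / (x j * x j) - 1 :=
    Real.log_le_sub_one_of_pos (by positivity)
  rw [Real.log_div (by positivity) (by positivity),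
    Real.log_mul hb2.ne' hb1.ne', Real.log_mul hbpos.ne' hbpos.ne'] at hq1
  have hA : ((x j + ε) * (x j - ε)) / (x j * x j) - 1 = -(ε ^ 2 / (x j * x j)) := by
    field_simp; ring
  rw [hA] at hq1
  have hq2 : Real.log ((x j + ε) / (x j - ε)) ≤ (x j + ε) / (x j - ε) - 1 :=
    Real.log_le_sub_one_of_pos (by positivity)
  rw [Real.log_div hb2.ne' hb1.ne'] at hq2
  have hB : (x j + ε) / (x j - ε) - 1 = 2 * ε / (x j - ε) := by
    field_simp; ring
  rw [hB] at hq2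
  have hm1 : x j * (Real.log (x j + ε) + Real.log (x j - ε) - 2 * Real.log (x j))
      ≤ x j * (-(ε ^ 2 / (x j * x j))) :=
    mul_le_mul_of_nonneg_left (by linarith) hbpos.le
  have hbb : x j * (-(ε ^ 2 / (x j * x j))) = -(ε ^ 2 / x j) := by
    field_simp
  rw [hbb] at hm1
  have hm2 : ε * (Real.log (x j + ε) - Real.log (x j - ε)) ≤ ε * (2 * ε / (x j - ε)) :=
    mul_le_mul_of_nonneg_left (by linarith) hε0.le
  have hee : ε * (2 * ε / (x j - ε)) = 2 * ε ^ 2 / (x j - ε) := by ring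
  rw [hee] at hm2
  have hEeq : (x j + ε) * Real.log (x j + ε) + (x j - ε) * Real.log (x j - ε)
        - 2 * (x j * Real.log (x j))
      = x j * (Real.log (x j + ε) + Real.log (x j - ε) - 2 * Real.log (x j))
        + ε * (Real.log (x j + ε) - Real.log (x j - ε)) := by ring
  have hKE : FF β (x j + ε) + FF β (x j - ε) - (FF β (x j) + FF β (x j))
      = -(β * ε ^ 2) + ((x j + ε) * Real.log (x j + ε) + (x j - ε) * Real.log (x j - ε)
          - 2 * (x j * Real.log (x j))) := by
    simp only [FF]; ring
  -- the key strict fraction inequality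
  have hfrac : 2 * ε ^ 2 / (x j - ε) - ε ^ 2 / x j < β * ε ^ 2 := by
    have hbe : x j - ε = (β * x j + 1) / (2 * β) := by
      rw [hεdef]; field_simp; ring
    have hgt2 : 0 < (β * x j - 1) * (β * x j - 1) := by nlinarith
    have key2 : 2 / (x j - ε) - 1 / x j < β := by
      rw [hbe, div_div_eq_mul_div,
        div_sub_div _ _ (by positivity) hbpos.ne', div_lt_iff₀ (by positivity)]
      nlinarith [hgt2]
    have key3 := mul_lt_mul_of_pos_right key2 (show (0:ℝ) < ε ^ 2 by positivity)
    have key4 : (2 / (x j - ε) - 1 / x j) * ε ^ 2 = 2 * ε ^ 2 / (x j - ε) - ε ^ 2 / x j := by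
      ring
    rw [key4] at key3
    linarith
  linarith [hkey0, hKE, hEeq, hm1, hm2, hfrac]

/-- The last coordinate index of `Fin q` (corresponding to `x_q`). -/
def lastIdx (q : ℕ) [NeZero q] : Fin q :=
  ⟨q - 1, Nat.sub_lt (Nat.pos_of_ne_zero (NeZero.ne q)) Nat.one_pos⟩

/-- `k` is one of the "middle" indices `2,…,q-1` (i.e. `1,…,q-2` in 0-based indexing). -/
def IsMid (q : ℕ) [NeZero q] (k : Fin q) : Prop := k ≠ 0 ∧ k ≠ lastIdx q

/-- Symmetries of the global minimizers of the Potts mean-field free energy (Lemma 5.4). -/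
theorem potts_minimizer_symmetries (q : ℕ) [NeZero q] (hq : 3 ≤ q) (β h : ℝ) (hβ : 0 ≤ β)
    (x : Fin q → ℝ) (hx : IsPottsMinimizer q β h x) :
    -- (1) for `h > 0`: `x₁ > x₂ = x₃ = … = x_q`
    (0 < h → (∀ j k : Fin q, j ≠ 0 → k ≠ 0 → x j = x k) ∧
      (∀ k : Fin q, k ≠ 0 → x k < x 0)) ∧
    -- (2) for `h < 0`: `x` is a permutation in the last `q-1` coordinates of a
    --     vector with `x₁ < x₂ = … = x_{q-1} ≤ x_q`
    (h < 0 → ∃ (y : Fin q → ℝ) (σ : Equiv.Perm (Fin q)),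
      σ 0 = 0 ∧ x = y ∘ σ ∧
      (∀ j k : Fin q, IsMid q j → IsMid q k → y j = y k) ∧
      (∀ j : Fin q, IsMid q j → y 0 < y j) ∧
      (∀ j : Fin q, IsMid q j → y j ≤ y (lastIdx q))) := by
  have hpos : ∀ i, 0 < x i := fun i => minimizer_pos hβ hx i
  -- stationarity with coordinate 0
  have hst0 : ∀ k : Fin q, k ≠ 0 →
      Real.log (x 0) - β * x 0 - h = Real.log (x k) - β * x k := by
    intro k hk0
    have := stationary hβ hx (Ne.symm hk0)
    rw [if_pos rfl, if_neg hk0, sub_zero] at this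
    exact this
  have hstjk : ∀ j k : Fin q, j ≠ 0 → k ≠ 0 → j ≠ k →
      Real.log (x j) - β * x j = Real.log (x k) - β * x k := by
    intro j k hj0 hk0 hjk
    have := stationary hβ hx hjk
    rw [if_neg hj0, if_neg hk0, sub_zero, sub_zero] at this
    exact this
  constructor
  · -- h > 0
    intro hh
    have hle0 : ∀ k : Fin q, k ≠ 0 → x k ≤ x 0 := by
      intro k _
      exact (mul_le_mul_iff_right₀ hh).1 (swap_le hx k)
    have hlt0 : ∀ k : Fin q, k ≠ 0 → x k < x 0 := by
      intro k hk0
      rcases (hle0 k hk0).lt_or_eq with h' | h'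
      · exact h'
      · exfalso
        have := hst0 k hk0
        rw [h'] at this
        linarith
    refine ⟨?_, hlt0⟩
    have aux : ∀ j k : Fin q, j ≠ 0 → k ≠ 0 → x j < x k → False := by
      intro j k hj0 hk0 hlt
      have hjk : j ≠ k := fun e => absurd (congrArg x e) (ne_of_lt hlt)
      have hsl := (slope_bound (hpos j) hlt (hstjk j k hj0 hk0 hjk)).1
      -- 1 < β * x k, x k ≤ x 0
      have hx0k : x k ≤ x 0 := hle0 k hk0
      have hlog : Real.log (x 0 / x k) ≤ x 0 / x k - 1 :=
        Real.log_le_sub_one_of_pos (div_pos (hpos 0) (hpos k))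
      rw [Real.log_div (hpos 0).ne' (hpos k).ne'] at hlog
      have hd : x 0 / x k - 1 ≤ β * (x 0 - x k) := by
        rw [div_sub_one (hpos k).ne', div_le_iff₀ (hpos k)]
        nlinarith [hsl, hx0k, hpos k]
      have := hst0 k hk0
      nlinarith [hlog, hd, this, hh]
    intro j k hj0 hk0
    by_contra hne
    rcases lt_or_gt_of_ne hne with hlt | hlt
    · exact aux j k hj0 hk0 hlt
    · exact aux k j hk0 hj0 hlt
  · -- h < 0
    intro hh
    have hle0 : ∀ k : Fin q, k ≠ 0 → x 0 ≤ x k := by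
      intro k _
      have := swap_le hx k
      nlinarith [this, hh]
    have hstrict : ∀ k : Fin q, k ≠ 0 → x 0 < x k := by
      intro k hk0
      rcases (hle0 k hk0).lt_or_eq with h' | h'
      · exact h'
      · exfalso
        have := hst0 k hk0
        rw [← h'] at this
        linarith
    -- pick the max coordinate among non-zero indices
    obtain ⟨m, hmmem, hmax⟩ := Finset.exists_max_image
      (Finset.univ.filter (fun k : Fin q => k ≠ 0)) x
      ⟨⟨1, by omega⟩, Finset.mem_filter.2 ⟨Finset.mem_univ _, by
        intro e
        have := congrArg Fin.val e
        simpa using this⟩⟩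
    have hm0 : m ≠ 0 := (Finset.mem_filter.1 hmmem).2
    have hmax' : ∀ k : Fin q, k ≠ 0 → x k ≤ x m := by
      intro k hk0
      exact hmax k (Finset.mem_filter.2 ⟨Finset.mem_univ _, hk0⟩)
    -- all coordinates other than 0 and m are equal
    have claim_eq : ∀ j k : Fin q, j ≠ 0 → j ≠ m → k ≠ 0 → k ≠ m → x j = x k := by
      have aux : ∀ j k : Fin q, j ≠ 0 → j ≠ m → k ≠ 0 → k ≠ m → x j < x k → False := by
        intro j k hj0 hjm hk0 hkm hlt
        have hjk : j ≠ k := fun e => absurd (congrArg x e) (ne_of_lt hlt)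
        have hsl := (slope_bound (hpos j) hlt (hstjk j k hj0 hk0 hjk)).1
        rcases lt_trichotomy (x k) (x m) with h' | h' | h'
        · have hsl2 := (slope_bound (hpos k) h' (hstjk k m hk0 hm0 hkm)).2
          linarith
        · exact no_double_top hβ hx hkm hk0 hm0 h' hsl
        · exact absurd (hmax' k hk0) (not_le.2 h')
      intro j k hj0 hjm hk0 hkm
      by_contra hne
      rcases lt_or_gt_of_ne hne with hlt | hlt
      · exact aux j k hj0 hjm hk0 hkm hlt
      · exact aux k j hk0 hkm hj0 hjm hlt
    -- build the permutation
    have hl0 : lastIdx q ≠ 0 := by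
      intro e
      have := congrArg Fin.val e
      simp [lastIdx] at this
      omega
    set σ := Equiv.swap m (lastIdx q) with hσ
    have hσ0 : σ 0 = 0 := Equiv.swap_apply_of_ne_of_ne (Ne.symm hm0) (Ne.symm hl0)
    have hkey : ∀ j : Fin q, IsMid q j → σ j ≠ 0 ∧ σ j ≠ m := by
      rintro j ⟨hj0, hjl⟩
      rcases eq_or_ne j m with rfl | hjm
      · rw [hσ, Equiv.swap_apply_left]
        exact ⟨hl0, Ne.symm hjl⟩
      · rw [hσ, Equiv.swap_apply_of_ne_of_ne hjm hjl]
        exact ⟨hj0, hjm⟩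
    refine ⟨x ∘ σ, σ, hσ0, ?_, ?_, ?_, ?_⟩
    · funext k
      simp only [Function.comp_apply, hσ, Equiv.swap_apply_self]
    · intro j k hj hk
      exact claim_eq (σ j) (σ k) (hkey j hj).1 (hkey j hj).2 (hkey k hk).1 (hkey k hk).2
    · intro j hj
      simp only [Function.comp_apply, hσ0]
      exact hstrict (σ j) (hkey j hj).1
    · intro j hj
      have hσl : σ (lastIdx q) = m := by rw [hσ, Equiv.swap_apply_right]
      simp only [Function.comp_apply, hσl]
      exact hmax' (σ j) (hkey j hj).1
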